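/- Merge lemma: for any effect signature E, any type X, and any terms t₁, t₂, t ∈ E*(X_⊥), if t₁ ⊑ t and t₂ ⊑ t, then the pair {t₁, t₂} has a least upper bound t₁ ⊔ t₂ in the partial order (E*(X_⊥), ⊑). -/
import Mathlib


universe u v w


/-- Finite terms over the effect signature `(E, ar)` with variables in `V`. -/
inductive Term (E : Type u) (ar : E → Type v) (V : Type w) : Type (max u v w)
  | var : V → Term E ar V
  | node : (m : E) → (ar m → Term E ar V) → Term E ar V

/-- The partial order `⊑` on partial terms in `E*(X_⊥)`. -/
inductive Term.Le {E : Type u} {ar : E → Type v} {X : Type w} :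
    Term E ar (Option X) → Term E ar (Option X) → Prop
  | bot (t : Term E ar (Option X)) : Term.Le (.var none) t
  | var (x : X) : Term.Le (.var (some x)) (.var (some x))
  | node (m : E) {t t' : ar m → Term E ar (Option X)} :
      (∀ n, Term.Le (t n) (t' n)) → Term.Le (.node m t) (.node m t')

theorem Term.Le.refl {E : Type u} {ar : E → Type v} {X : Type w}
    (t : Term E ar (Option X)) : Term.Le t t := by
  induction t with
  | var v =>
    cases v with
    | none => exact .bot _
    | some x => exact .var x
  | node m f ih => exact .node m ih

/-- merge lemma: two terms below a common bound have a least
upper bound in `(E*(X_⊥), ⊑)`. -/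
theorem term_merge (E : Type u) (ar : E → Type v) (X : Type w)
    (t₁ t₂ t : Term E ar (Option X)) (h₁ : Term.Le t₁ t) (h₂ : Term.Le t₂ t) :
    ∃ u : Term E ar (Option X),
      Term.Le t₁ u ∧ Term.Le t₂ u ∧
      ∀ w : Term E ar (Option X), Term.Le t₁ w → Term.Le t₂ w → Term.Le u w := by
  induction h₁ generalizing t₂ with
  | bot t =>
    exact ⟨t₂, .bot _, .refl _, fun w _ hw => hw⟩
  | var x =>
    cases h₂ with
    | bot => exact ⟨.var (some x), .var x, .bot _, fun w hw _ => hw⟩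
    | var => exact ⟨.var (some x), .var x, .var x, fun w hw _ => hw⟩
  | node m h ih =>
    rename_i f f'
    cases h₂ with
    | bot =>
      exact ⟨.node m f, .refl _, .bot _, fun w hw _ => hw⟩
    | node _ h2 =>
      rename_i g
      choose u hu1 hu2 hmin using fun n => ih n _ (h2 n)
      refine ⟨.node m u, .node m hu1, .node m hu2, fun w hw1 hw2 => ?_⟩
      cases hw1 with
      | node _ hw1 =>
        cases hw2 with
        | node _ hw2 => exact .node m fun n => hmin n _ (hw1 n) (hw2 n)
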